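/- Let p > 0 be an even integer. For all real numbers x and Δ, 2^(−p)(x^(p−2)Δ² + Δ^p) ≤ (x+Δ)^p − (x^p + p·x^(p−1)Δ) ≤ p·2^(p−1)(x^(p−2)Δ² + Δ^p). -/

import Mathlib

-- step 1: key1 : p * a^(p-1) * (b - a) ≤ b^p - a^p for 0 ≤ a, b
lemma key1 (p : ℕ) (a b : ℝ) (ha : 0 ≤ a) (hb : 0 ≤ b) :
    (p:ℝ) * a^(p-1) * (b - a) ≤ b^p - a^p := by
  have hid := geom_sum₂_mul b a p
  rw [← hid]
  rcases le_total a b with h | h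
  · refine mul_le_mul_of_nonneg_right ?_ (by linarith)
    calc (p:ℝ) * a^(p-1) = ∑ _i ∈ Finset.range p, a^(p-1) := by
          simp [Finset.sum_const, mul_comm]
    _ ≤ ∑ i ∈ Finset.range p, b^i * a^(p-1-i) := by
          refine Finset.sum_le_sum fun i hi => ?_
          have hip : i + (p-1-i) = p-1 := by
            have := Finset.mem_range.mp hi; omega
          calc a^(p-1) = a^i * a^(p-1-i) := by rw [← pow_add, hip]
          _ ≤ b^i * a^(p-1-i) :=
              mul_le_mul_of_nonneg_right (pow_le_pow_left₀ ha h i) (pow_nonneg ha _)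
  · have hs : ∑ i ∈ Finset.range p, b^i * a^(p-1-i) ≤ (p:ℝ) * a^(p-1) := by
      calc ∑ i ∈ Finset.range p, b^i * a^(p-1-i) ≤ ∑ _i ∈ Finset.range p, a^(p-1) := by
            refine Finset.sum_le_sum fun i hi => ?_
            have hip : i + (p-1-i) = p-1 := by
              have := Finset.mem_range.mp hi; omega
            calc b^i * a^(p-1-i) ≤ a^i * a^(p-1-i) :=
                  mul_le_mul_of_nonneg_right (pow_le_pow_left₀ hb h i) (pow_nonneg ha _)
            _ = a^(p-1) := by rw [← pow_add, hip]
      _ = (p:ℝ) * a^(p-1) := by simp [Finset.sum_const, mul_comm]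
    have hba : b - a ≤ 0 := by linarith
    exact mul_le_mul_of_nonpos_right hs hba

-- step 2: tangent line inequality for even powers
lemma tangent (p : ℕ) (hp : Even p) (hp0 : p ≠ 0) (x y : ℝ) :
    x ^ p + (p:ℝ) * x ^ (p-1) * (y - x) ≤ y ^ p := by
  have h1 := key1 p |x| |y| (abs_nonneg x) (abs_nonneg y)
  have hx : |x| ^ p = x ^ p := hp.pow_abs x
  have hy : |y| ^ p = y ^ p := hp.pow_abs y
  have h2 : x ^ (p-1) * y ≤ |x| ^ (p-1) * |y| := by
    calc x ^ (p-1) * y ≤ |x ^ (p-1) * y| := le_abs_self _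
    _ = |x| ^ (p-1) * |y| := by rw [abs_mul, abs_pow]
  have hxx : x ^ (p-1) * x = x ^ p := pow_sub_one_mul hp0 x
  have haa : |x| ^ (p-1) * |x| = |x| ^ p := pow_sub_one_mul hp0 |x|
  have e1 : (p:ℝ) * |x|^(p-1) * (|y| - |x|) = (p:ℝ)*(|x|^(p-1)*|y|) - (p:ℝ)*(|x|^(p-1)*|x|) := by
    ring
  have e2 : x^p + (p:ℝ)*x^(p-1)*(y-x) = x^p + (p:ℝ)*(x^(p-1)*y) - (p:ℝ)*(x^(p-1)*x) := by
    ring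
  have h4 : (p:ℝ)*(x^(p-1)*y) ≤ (p:ℝ)*(|x|^(p-1)*|y|) :=
    mul_le_mul_of_nonneg_left h2 (Nat.cast_nonneg p)
  rw [e1, haa, hx, hy] at h1
  rw [e2, hxx]
  linarith

lemma bracket (p : ℕ) (hp : Even p) (hp4 : 4 ≤ p) (u v : ℝ) :
    2*v^p + 2*(u^(p-2)*v^2) ≤ (u+v)^p + (u-v)^p - 2*u^p := by
  set f : ℕ → ℝ := fun k => (u^k * v^(p-k) + u^k * (-v)^(p-k)) * (p.choose k : ℝ) with hf
  have expand : (u+v)^p + (u-v)^p = ∑ k ∈ Finset.range (p+1), f k := by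
    rw [add_pow, sub_eq_add_neg, add_pow, ← Finset.sum_add_distrib]
    exact Finset.sum_congr rfl fun k _ => by simp [hf]; ring
  have hfnonneg : ∀ k, k ≤ p → 0 ≤ f k := by
    intro k hk
    rcases Nat.even_or_odd (p - k) with he | ho
    · have hke : Even k := by
        rcases hp with ⟨a, ha⟩; rcases he with ⟨b, hb⟩
        exact ⟨a - b, by omega⟩
      have : (-v)^(p-k) = v^(p-k) := he.neg_pow v
      rw [hf]
      simp only [this]
      have h1 : 0 ≤ u^k := hke.pow_nonneg u
      have h2 : 0 ≤ v^(p-k) := he.pow_nonneg v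
      positivity
    · have : (-v)^(p-k) = -v^(p-k) := ho.neg_pow v
      rw [hf]; simp only [this]; simp
  have hsub : ({0, p-2, p} : Finset ℕ) ⊆ Finset.range (p+1) := by
    intro k hk
    simp only [Finset.mem_insert, Finset.mem_singleton] at hk
    rw [Finset.mem_range]; omega
  have hkey : ∑ k ∈ ({0, p-2, p} : Finset ℕ), f k ≤ ∑ k ∈ Finset.range (p+1), f k := by
    refine Finset.sum_le_sum_of_subset_of_nonneg hsub fun k hk _ => ?_
    exact hfnonneg k (by have := Finset.mem_range.mp hk; omega)
  have h02 : (0:ℕ) ∉ ({p-2, p} : Finset ℕ) := by simp; omega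
  have h2p : (p-2) ∉ ({p} : Finset ℕ) := by simp; omega
  rw [Finset.sum_insert h02, Finset.sum_insert h2p, Finset.sum_singleton] at hkey
  have hf0 : f 0 = 2 * v^p := by
    have : (-v)^p = v^p := hp.neg_pow v
    simp [hf, this]; ring
  have hfp : f p = 2 * u^p := by simp [hf]; ring
  have hq : Even (p-2) := by
    rcases hp with ⟨a, ha⟩; exact ⟨a-1, by omega⟩
  have hfp2 : 2*(u^(p-2)*v^2) ≤ f (p-2) := by
    have hpk : p - (p-2) = 2 := by omega
    have hc : (1:ℝ) ≤ (p.choose (p-2) : ℝ) := by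
      have : 0 < p.choose (p-2) := Nat.choose_pos (by omega)
      exact_mod_cast this
    have hnn : 0 ≤ u^(p-2) * v^2 := mul_nonneg (hq.pow_nonneg u) (sq_nonneg v)
    rw [hf]
    simp only [hpk]
    have : (-v)^2 = v^2 := by ring
    rw [this]
    calc 2*(u^(p-2)*v^2) = (u^(p-2)*v^2 + u^(p-2)*v^2) * 1 := by ring
    _ ≤ (u^(p-2)*v^2 + u^(p-2)*v^2) * (p.choose (p-2) : ℝ) := by
        refine mul_le_mul_of_nonneg_left hc (by linarith)
  rw [expand]
  rw [hf0, hfp] at hkey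
  linarith


lemma lowerE (p : ℕ) (hp : Even p) (hp4 : 4 ≤ p) (x Δ : ℝ) :
    2*(Δ/2)^p + 2*((x+Δ/2)^(p-2)*(Δ/2)^2) ≤ (x+Δ)^p - (x^p + (p:ℝ)*x^(p-1)*Δ) := by
  have hb := bracket p hp hp4 (x+Δ/2) (Δ/2)
  rw [show x + Δ/2 + Δ/2 = x + Δ from by ring, show x + Δ/2 - Δ/2 = x from by ring] at hb
  have ht := tangent p hp (by omega) x (x+Δ/2)
  rw [show x + Δ/2 - x = Δ/2 from by ring] at ht
  have hexp : (p:ℝ)*x^(p-1)*(Δ/2) = (p:ℝ)*x^(p-1)*Δ/2 := by ring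
  rw [hexp] at ht
  linarith

lemma lower4 (p : ℕ) (hp : Even p) (hp4 : 4 ≤ p) (x Δ : ℝ) :
    (x^(p-2) * Δ^2 + Δ^p) / 2^p ≤ (x+Δ)^p - (x^p + (p:ℝ)*x^(p-1)*Δ) := by
  obtain ⟨m, rfl⟩ : ∃ m, p = m + 4 := ⟨p - 4, by omega⟩
  set E := (x+Δ)^(m+4) - (x^(m+4) + ((m+4:ℕ):ℝ)*x^(m+4-1)*Δ) with hE
  have hme : Even m := by rcases hp with ⟨a, ha⟩; exact ⟨a-2, by omega⟩
  have hq : Even (m+2) := by rcases hme with ⟨a, ha⟩; exact ⟨a+1, by omega⟩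
  have hle := lowerE (m+4) hp hp4 x Δ
  rw [show m+4-2 = m+2 from by omega] at hle ⊢
  rw [← hE] at hle
  set u := x + Δ/2 with hu
  -- claim B : Δ^(m+4) ≤ 2^(m+3) * E
  have hunn : 0 ≤ u^(m+2)*(Δ/2)^2 := mul_nonneg (hq.pow_nonneg u) (sq_nonneg _)
  have hBid : (2:ℝ)^(m+3) * (2*(Δ/2)^(m+4)) = Δ^(m+4) := by
    rw [div_pow]; rw [show ((2:ℝ))^(m+4) = 2^(m+3)*2 from by ring]
    field_simp
  have claimB : Δ^(m+4) ≤ 2^(m+3) * E := by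
    have h1 : 2*(Δ/2)^(m+4) ≤ E := by linarith
    calc Δ^(m+4) = (2:ℝ)^(m+3) * (2*(Δ/2)^(m+4)) := hBid.symm
    _ ≤ (2:ℝ)^(m+3) * E := by
        refine mul_le_mul_of_nonneg_left h1 (by positivity)
  -- claim A : x^(m+2) * Δ^2 ≤ 2^(m+3) * E
  have hxq : x^(m+2) ≤ 2^(m+1) * (u^(m+2) + (Δ/2)^(m+2)) := by
    have h := Even.add_pow_le (a := u) (b := -(Δ/2)) (n := m+2) hq
    rw [show u + -(Δ/2) = x from by ring, hq.neg_pow (Δ/2),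
      show m+2-1 = m+1 from by omega] at h
    exact h
  have claimA : x^(m+2) * Δ^2 ≤ 2^(m+3) * E := by
    have hE2 : (2:ℝ)^(m+3) * E ≥ Δ^(m+4) + 2^(m+2)*(u^(m+2)*Δ^2) := by
      have h1 : (2:ℝ)^(m+3) * (2*(Δ/2)^(m+4) + 2*(u^(m+2)*(Δ/2)^2))
          = Δ^(m+4) + 2^(m+2)*(u^(m+2)*Δ^2) := by
        rw [div_pow, show ((Δ:ℝ)/2)^2 = Δ^2/4 from by ring,
          show ((2:ℝ))^(m+4) = 2^(m+3)*2 from by ring]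
        field_simp
        ring
      calc Δ^(m+4) + 2^(m+2)*(u^(m+2)*Δ^2)
          = (2:ℝ)^(m+3) * (2*(Δ/2)^(m+4) + 2*(u^(m+2)*(Δ/2)^2)) := h1.symm
      _ ≤ (2:ℝ)^(m+3) * E := mul_le_mul_of_nonneg_left hle (by positivity)
    have h2 : x^(m+2)*Δ^2 ≤ 2^(m+1)*(u^(m+2)*Δ^2) + Δ^(m+4)/2 := by
      have h3 : x^(m+2)*Δ^2 ≤ (2^(m+1) * (u^(m+2) + (Δ/2)^(m+2))) * Δ^2 :=
        mul_le_mul_of_nonneg_right hxq (sq_nonneg Δ)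
      have h4 : (2:ℝ)^(m+1) * (Δ/2)^(m+2) * Δ^2 = Δ^(m+4)/2 := by
        rw [div_pow, show ((2:ℝ))^(m+2) = 2^(m+1)*2 from by ring]
        field_simp
        ring
      calc x^(m+2)*Δ^2 ≤ (2^(m+1) * (u^(m+2) + (Δ/2)^(m+2))) * Δ^2 := h3
      _ = 2^(m+1)*(u^(m+2)*Δ^2) + 2^(m+1)*(Δ/2)^(m+2)*Δ^2 := by ring
      _ = 2^(m+1)*(u^(m+2)*Δ^2) + Δ^(m+4)/2 := by rw [h4]
    -- 2^(m+2)*(u^..*Δ^2) = 2*(2^(m+1)*(u^..*Δ^2)) and Δ^(m+4) ≥ 0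
    have hDnn : (0:ℝ) ≤ Δ^(m+4) := hp.pow_nonneg Δ
    have hunn2 : (0:ℝ) ≤ u^(m+2)*Δ^2 := mul_nonneg (hq.pow_nonneg u) (sq_nonneg _)
    have hpow : (2:ℝ)^(m+2)*(u^(m+2)*Δ^2) = 2*(2^(m+1)*(u^(m+2)*Δ^2)) := by ring
    have hterm : (0:ℝ) ≤ 2^(m+2)*(u^(m+2)*Δ^2) := mul_nonneg (by positivity) hunn2
    have hnn : (0:ℝ) ≤ 2^(m+3)*E := by linarith
    have hxnn : (0:ℝ) ≤ x^(m+2)*Δ^2 := mul_nonneg (hq.pow_nonneg x) (sq_nonneg Δ)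
    linarith
  -- combine
  have h2p : ((2:ℝ))^(m+4) = 2^(m+3)*2 := by ring
  rw [div_le_iff₀ (by positivity : (0:ℝ) < (2:ℝ)^(m+4))]
  have hEnn : 0 ≤ (2:ℝ)^(m+3) * E := le_trans (hp.pow_nonneg Δ) claimB
  calc x^(m+2)*Δ^2 + Δ^(m+4) ≤ 2^(m+3)*E + 2^(m+3)*E := add_le_add claimA claimB
  _ = E * 2^(m+4) := by rw [h2p]; ring

lemma upper (p : ℕ) (hp : Even p) (hp2 : 2 ≤ p) (x Δ : ℝ) :
    (x+Δ)^p - (x^p + (p:ℝ)*x^(p-1)*Δ) ≤ (p:ℝ) * 2^(p-1) * (x^(p-2) * Δ^2 + Δ^p) := by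
  have hq : Even (p-2) := by rcases hp with ⟨a, ha⟩; exact ⟨a-1, by omega⟩
  have expand : (x+Δ)^p - (x^p + (p:ℝ)*x^(p-1)*Δ)
      = ∑ k ∈ Finset.range (p-1), x^k * Δ^(p-k) * (p.choose k : ℝ) := by
    rw [add_pow]
    rw [show p + 1 = (p-1) + 1 + 1 from by omega, Finset.sum_range_succ, Finset.sum_range_succ]
    have hcp : p.choose (p-1) = p := by
      rw [Nat.choose_symm (by omega : 1 ≤ p), Nat.choose_one_right]
    rw [show p - 1 + 1 = p from by omega, show p - (p-1) = 1 from by omega, hcp]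
    simp
    ring
  set A := x^(p-2) * Δ^2 + Δ^p with hA
  -- per-term bound
  have hterm : ∀ k, k ≤ p - 2 → x^k * Δ^(p-k) * (p.choose k : ℝ) ≤ (p.choose k : ℝ) * A := by
    intro k hk
    have hc : (0:ℝ) ≤ (p.choose k : ℝ) := Nat.cast_nonneg _
    have h1 : x^k * Δ^(p-k) ≤ A := by
      have habs : x^k * Δ^(p-k) ≤ |x|^k * |Δ|^(p-k) := by
        calc x^k * Δ^(p-k) ≤ |x^k * Δ^(p-k)| := le_abs_self _
        _ = |x|^k * |Δ|^(p-k) := by rw [abs_mul, abs_pow, abs_pow]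
      have hxnn : (0:ℝ) ≤ x^(p-2)*Δ^2 := mul_nonneg (hq.pow_nonneg x) (sq_nonneg Δ)
      have hDnn : (0:ℝ) ≤ Δ^p := hp.pow_nonneg Δ
      rcases le_total |x| |Δ| with h | h
      · have : |x|^k * |Δ|^(p-k) ≤ |Δ|^k * |Δ|^(p-k) :=
          mul_le_mul_of_nonneg_right (pow_le_pow_left₀ (abs_nonneg x) h k)
            (pow_nonneg (abs_nonneg Δ) _)
        rw [← pow_add, show k + (p-k) = p from by omega, hp.pow_abs] at this
        rw [hA]; linarith
      · have h2 : |Δ|^(p-k) = |Δ|^(p-k-2) * |Δ|^2 := by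
          rw [← pow_add]; congr 1; omega
        have h3 : |Δ|^(p-k-2) ≤ |x|^(p-k-2) :=
          pow_le_pow_left₀ (abs_nonneg Δ) h _
        have h4 : |x|^k * |Δ|^(p-k) ≤ |x|^k * (|x|^(p-k-2) * |Δ|^2) := by
          rw [h2]
          refine mul_le_mul_of_nonneg_left
            (mul_le_mul_of_nonneg_right h3 (sq_nonneg _)) (pow_nonneg (abs_nonneg x) k)
        have h5 : |x|^k * (|x|^(p-k-2) * |Δ|^2) = |x|^(p-2) * |Δ|^2 := by
          rw [← mul_assoc, ← pow_add, show k + (p-k-2) = p-2 from by omega]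
        rw [h5, hq.pow_abs, sq_abs] at h4
        rw [hA]; linarith
    calc x^k * Δ^(p-k) * (p.choose k : ℝ) ≤ A * (p.choose k : ℝ) :=
        mul_le_mul_of_nonneg_right h1 hc
    _ = (p.choose k : ℝ) * A := mul_comm _ _
  have hAnn : 0 ≤ A := by
    rw [hA]
    have hxnn : (0:ℝ) ≤ x^(p-2)*Δ^2 := mul_nonneg (hq.pow_nonneg x) (sq_nonneg Δ)
    have hDnn : (0:ℝ) ≤ Δ^p := hp.pow_nonneg Δ
    linarith
  have hsum : ∑ k ∈ Finset.range (p-1), x^k * Δ^(p-k) * (p.choose k : ℝ)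
      ≤ ∑ k ∈ Finset.range (p-1), (p.choose k : ℝ) * A := by
    refine Finset.sum_le_sum fun k hk => hterm k (by have := Finset.mem_range.mp hk; omega)
  have hchoose : ∑ k ∈ Finset.range (p-1), (p.choose k : ℝ) ≤ 2^p := by
    have h1 : ∑ k ∈ Finset.range (p-1), p.choose k ≤ ∑ k ∈ Finset.range (p+1), p.choose k := by
      refine Finset.sum_le_sum_of_subset (by intro k hk; simp at hk ⊢; omega)
    rw [Nat.sum_range_choose] at h1
    calc ∑ k ∈ Finset.range (p-1), (p.choose k : ℝ)
        = ((∑ k ∈ Finset.range (p-1), p.choose k : ℕ) : ℝ) := by push_cast; ring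
    _ ≤ ((2^p : ℕ) : ℝ) := by exact_mod_cast h1
    _ = 2^p := by push_cast; ring
  have hfinal : ∑ k ∈ Finset.range (p-1), (p.choose k : ℝ) * A ≤ (p:ℝ) * 2^(p-1) * A := by
    rw [← Finset.sum_mul]
    refine mul_le_mul_of_nonneg_right ?_ hAnn
    calc ∑ k ∈ Finset.range (p-1), (p.choose k : ℝ) ≤ 2^p := hchoose
    _ = 2 * 2^(p-1) := by
        rw [← pow_succ']; congr 1; omega
    _ ≤ (p:ℝ) * 2^(p-1) := by
        refine mul_le_mul_of_nonneg_right ?_ (by positivity)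
        exact_mod_cast hp2
  rw [expand]
  linarith

theorem stmt_4 (p : ℕ) (hp : Even p) (hp0 : 0 < p) (x Δ : ℝ) :
    (2:ℝ)^(-(p:ℤ)) * (x^(p-2) * Δ^2 + Δ^p) ≤ (x+Δ)^p - (x^p + p * x^(p-1) * Δ) ∧
    (x+Δ)^p - (x^p + p * x^(p-1) * Δ) ≤ p * 2^(p-1) * (x^(p-2) * Δ^2 + Δ^p) := by
  have hp2 : 2 ≤ p := by rcases hp with ⟨k, hk⟩; omega
  have hz : (2:ℝ)^(-(p:ℤ)) = ((2:ℝ)^p)⁻¹ := by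
    rw [zpow_neg, zpow_natCast]
  constructor
  · rw [hz, inv_mul_eq_div]
    have hcase : p = 2 ∨ 4 ≤ p := by rcases hp with ⟨k, hk⟩; omega
    rcases hcase with rfl | h4
    · norm_num
      nlinarith [sq_nonneg Δ]
    · exact lower4 p hp h4 x Δ
  · exact upper p hp hp2 x Δ
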